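/- arXiv:0803.3850 — 8 statements merged into one kernel-verified Lean document; each statement's English description precedes it below -/
import Mathlib

section
/- For all S > 0, P(S) ≥ σ_w^2. -/
noncomputable def Pinf (a σw S : ℝ) : ℝ :=
  ((a^2 - 1) + σw^2 * S + Real.sqrt (((a^2 - 1) + σw^2 * S)^2 + 4 * σw^2 * S)) / (2 * S)

theorem stmt_2 (a σw : ℝ) (hσw : 0 < σw) :
    ∀ S : ℝ, 0 < S → σw^2 ≤ Pinf a σw S := by
  intro S hS
  set b : ℝ := (a^2 - 1) + σw^2 * S with hb
  have key : 2 * σw^2 * S - b ≤ Real.sqrt (b^2 + 4 * σw^2 * S) := by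
    have h1 : (2 * σw^2 * S - b)^2 ≤ b^2 + 4 * σw^2 * S := by
      have h2 : σw^2 * S * (a^2) ≥ 0 := by positivity
      nlinarith [h2, hb]
    calc 2 * σw^2 * S - b ≤ |2 * σw^2 * S - b| := le_abs_self _
      _ = Real.sqrt ((2 * σw^2 * S - b)^2) := (Real.sqrt_sq_eq_abs _).symm
      _ ≤ Real.sqrt (b^2 + 4 * σw^2 * S) := Real.sqrt_le_sqrt h1
  rw [Pinf, le_div_iff₀ (by positivity)]
  nlinarith [key]
end

section
/- If |a| < 1, then for all S > 0, P(S) ≤ σ_w^2 / (1 - a^2). -/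
theorem stmt_3 (a σw : ℝ) (hσw : 0 < σw) (ha : |a| < 1) :
    ∀ S : ℝ, 0 < S → Pinf a σw S ≤ σw^2 / (1 - a^2) := by
  intro S hS
  have ha2 : a^2 < 1 := by
    have := abs_nonneg a
    nlinarith [sq_abs a]
  have h1 : (0:ℝ) < 1 - a^2 := by linarith
  unfold Pinf
  rw [div_le_div_iff₀ (by positivity) h1]
  have key : Real.sqrt (((a^2 - 1) + σw^2 * S)^2 + 4 * σw^2 * S)
      ≤ σw^2 * (2 * S) / (1 - a^2) - ((a^2 - 1) + σw^2 * S) := by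
    rw [Real.sqrt_le_iff]
    constructor
    · have h4 : 0 < σw^2 * (2 * S) / (1 - a^2) := by positivity
      have h5 : σw^2 * S ≤ σw^2 * (2 * S) / (1 - a^2) := by
        rw [le_div_iff₀ h1]
        nlinarith [mul_pos (mul_pos hσw hσw) hS, sq_nonneg a]
      linarith
    · rw [div_sub' (ne_of_gt h1), div_pow, le_div_iff₀ (by positivity)]
      nlinarith [sq_nonneg (S * σw^2 * a), mul_pos (mul_pos hσw hσw) hS, sq_nonneg a,
        mul_nonneg (mul_nonneg (sq_nonneg (S * σw^2 * a)) (sq_nonneg a)) (sq_nonneg a)]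
  have hrw : ((a^2 - 1) + σw^2 * S + Real.sqrt (((a^2 - 1) + σw^2 * S)^2 + 4 * σw^2 * S)) * (1 - a^2)
      ≤ (σw^2 * (2 * S) / (1 - a^2)) * (1 - a^2) := by
    have := key
    nlinarith
  calc ((a^2 - 1) + σw^2 * S + Real.sqrt (((a^2 - 1) + σw^2 * S)^2 + 4 * σw^2 * S)) * (1 - a^2)
      ≤ (σw^2 * (2 * S) / (1 - a^2)) * (1 - a^2) := hrw
    _ = σw^2 * (2 * S) := by field_simp
end

section
/- In the symmetric setting (α_i = α, c_i = c, σ_i^2 = σ_v^2, h_i = h for all i with α, h, c ≠ 0, σ_v^2 > 0, σ_n^2 ≥ 0), the multi-access SNR S = M^2 α^2 h^2 c^2 / (M α^2 h^2 σ_v^2 + σ_n^2) is greater than or equal to the orthogonal SNR S^o = M α^2 h^2 c^2 / (α^2 h^2 σ_v^2 + σ_n^2), with equality iff σ_n^2 = 0 or M = 1. -/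
theorem stmt_6 (M : ℕ) (hM : 1 ≤ M) (α h c σv2 σn2 : ℝ)
    (hα : α ≠ 0) (hh : h ≠ 0) (hc : c ≠ 0) (hσv : 0 < σv2) (hσn : 0 ≤ σn2) :
    (M : ℝ) * α^2 * h^2 * c^2 / (α^2 * h^2 * σv2 + σn2) ≤
      (M : ℝ)^2 * α^2 * h^2 * c^2 / ((M : ℝ) * α^2 * h^2 * σv2 + σn2) ∧
    ((M : ℝ)^2 * α^2 * h^2 * c^2 / ((M : ℝ) * α^2 * h^2 * σv2 + σn2) =
        (M : ℝ) * α^2 * h^2 * c^2 / (α^2 * h^2 * σv2 + σn2) ↔ σn2 = 0 ∨ M = 1) := by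
  have hA : 0 < α^2 * h^2 := by positivity
  have hM1 : (1 : ℝ) ≤ (M : ℝ) := by exact_mod_cast hM
  have hMpos : (0 : ℝ) < M := by linarith
  have hD1 : 0 < α^2 * h^2 * σv2 + σn2 := by nlinarith
  have hD2 : 0 < (M : ℝ) * α^2 * h^2 * σv2 + σn2 := by nlinarith [mul_pos hMpos (mul_pos hA hσv)]
  have hc2 : 0 < c^2 := by positivity
  constructor
  · rw [div_le_div_iff₀ hD1 hD2]
    nlinarith [mul_nonneg (mul_nonneg hMpos.le hA.le) (mul_nonneg (mul_nonneg hc2.le hσn) (sub_nonneg.2 hM1))]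
  · rw [div_eq_div_iff hD2.ne' hD1.ne']
    constructor
    · intro heq
      by_contra hcon
      push_neg at hcon
      obtain ⟨hn0, hM0⟩ := hcon
      have hσnpos : 0 < σn2 := lt_of_le_of_ne hσn (Ne.symm hn0)
      have hM1' : (1 : ℝ) < (M : ℝ) := by
        have : 1 < M := lt_of_le_of_ne hM (Ne.symm hM0)
        exact_mod_cast this
      nlinarith [mul_pos (mul_pos hMpos hA) (mul_pos hc2 (mul_pos hσnpos (sub_pos.2 hM1')))]
    · rintro (h0 | h1)
      · subst h0; ring
      · subst h1; push_cast; ring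
end

section
/- (Symmetric multi-access asymptotics, unscaled.) With S(M) = M^2 h^2 c^2 / (M h^2 σ_v^2 + σ_n^2), the quantity M·(P(S(M)) − σ_w^2) converges to a^2 σ_v^2 / c^2 as M → ∞. Equivalently, P∞ = σ_w^2 + (a^2 σ_v^2/c^2)/M + O(1/M^2). -/
lemma pinf_key (a σw S m : ℝ) (hS : 0 < S) (hC : (a^2 - 1) - σw^2 * S < 0) (hm : 0 < m) :
    m * (Pinf a σw S - σw^2)
      = 2 * a^2 * σw^2 /
        (Real.sqrt (((a^2 - 1)/m - σw^2 * (S/m))^2 + 4 * a^2 * σw^2 * ((S/m)/m))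
          - ((a^2 - 1)/m - σw^2 * (S/m))) := by
  have hm' : m ≠ 0 := hm.ne'
  set C : ℝ := (a^2 - 1) - σw^2 * S with hCdef
  have hnn : (0:ℝ) ≤ C^2 + 4 * a^2 * σw^2 * S := by positivity
  have hBC : ((a^2 - 1) + σw^2 * S)^2 + 4 * σw^2 * S = C^2 + 4 * a^2 * σw^2 * S := by
    rw [hCdef]; ring
  set R : ℝ := Real.sqrt (C^2 + 4 * a^2 * σw^2 * S) with hRdef
  have hR0 : 0 ≤ R := Real.sqrt_nonneg _
  have hRsq : R^2 = C^2 + 4 * a^2 * σw^2 * S := Real.sq_sqrt hnn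
  have hCm : (a^2 - 1)/m - σw^2 * (S/m) = C/m := by rw [hCdef]; ring
  have hinner : ((a^2 - 1)/m - σw^2 * (S/m))^2 + 4 * a^2 * σw^2 * ((S/m)/m)
      = (C^2 + 4 * a^2 * σw^2 * S) / m^2 := by
    rw [hCm]; field_simp
  have hsq : Real.sqrt (((a^2 - 1)/m - σw^2 * (S/m))^2 + 4 * a^2 * σw^2 * ((S/m)/m))
      = R / m := by
    rw [hinner, hRdef, Real.sqrt_div hnn, Real.sqrt_sq hm.le]
  rw [hsq, hCm, Pinf, hBC, ← hRdef]
  have hRC : 0 < R - C := by linarith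
  have hden : R / m - C / m ≠ 0 := by
    rw [div_sub_div_same]
    exact div_ne_zero hRC.ne' hm'
  have h2S : (2:ℝ) * S ≠ 0 := by positivity
  rw [div_sub_div_same, eq_div_iff (div_ne_zero hRC.ne' hm')]
  field_simp
  linear_combination hRsq + (C + (a^2 - 1 - σw^2 * S)) * hCdef

theorem stmt_9 (a σw h c σv2 σn2 : ℝ) (hσw : 0 < σw) (hh : h ≠ 0) (hc : c ≠ 0)
    (hσv : 0 < σv2) (hσn : 0 ≤ σn2) :
    Filter.Tendsto
      (fun M : ℕ =>
        (M : ℝ) *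
          (Pinf a σw ((M : ℝ)^2 * h^2 * c^2 / ((M : ℝ) * h^2 * σv2 + σn2)) - σw^2))
      Filter.atTop (nhds (a^2 * σv2 / c^2)) := by
  have hh2 : 0 < h^2 := by positivity
  have hc2 : 0 < c^2 := by positivity
  set L : ℝ := c^2 / σv2 with hLdef
  have hL : 0 < L := by positivity
  set S : ℕ → ℝ := fun M => (M : ℝ)^2 * h^2 * c^2 / ((M : ℝ) * h^2 * σv2 + σn2) with hSdef
  set t : ℕ → ℝ := fun M => S M / M with htdef
  -- denominators positive for M ≥ 1
  have hden : ∀ M : ℕ, 1 ≤ M → 0 < (M : ℝ) * h^2 * σv2 + σn2 := by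
    intro M hM
    have h1 : (1:ℝ) ≤ (M:ℝ) := by exact_mod_cast hM
    nlinarith [mul_pos (mul_pos (show (0:ℝ) < (M:ℝ) by linarith) hh2) hσv]
  have hSpos : ∀ M : ℕ, 1 ≤ M → 0 < S M := by
    intro M hM
    have h1 : (1:ℝ) ≤ (M:ℝ) := by exact_mod_cast hM
    have := hden M hM
    exact div_pos (by nlinarith [mul_pos (mul_pos (mul_pos (show (0:ℝ) < (M:ℝ)
      by linarith) (show (0:ℝ) < (M:ℝ) by linarith)) hh2) hc2]) this
  -- t tends to L
  have ht : Filter.Tendsto t Filter.atTop (nhds L) := by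
    have heq : ∀ᶠ M : ℕ in Filter.atTop,
        h^2 * c^2 / (h^2 * σv2 + σn2 / M) = t M := by
      filter_upwards [Filter.eventually_ge_atTop 1] with M hM
      have h1 : (1:ℝ) ≤ (M:ℝ) := by exact_mod_cast hM
      have hM0 : (M:ℝ) ≠ 0 := by positivity
      have hd := (hden M hM).ne'
      simp only [htdef, hSdef]
      field_simp
    have hlim : Filter.Tendsto (fun M : ℕ => h^2 * c^2 / (h^2 * σv2 + σn2 / M))
        Filter.atTop (nhds L) := by
      have hd : Filter.Tendsto (fun M : ℕ => h^2 * σv2 + σn2 / M) Filter.atTop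
          (nhds (h^2 * σv2)) := by
        have := (tendsto_const_nhds (α := ℕ) (f := Filter.atTop) (x := h^2 * σv2)).add
          (tendsto_const_div_atTop_nhds_zero_nat σn2)
        simpa using this
      have := (tendsto_const_nhds (α := ℕ) (f := Filter.atTop) (x := h^2 * c^2)).div hd
        (by positivity)
      convert this using 2
      · rfl
      rw [hLdef]
      field_simp
    exact Filter.Tendsto.congr' heq hlim
  -- S tends to atTop
  have hStop : Filter.Tendsto S Filter.atTop Filter.atTop := by
    have hMtop : Filter.Tendsto (fun M : ℕ => (M : ℝ)) Filter.atTop Filter.atTop :=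
      tendsto_natCast_atTop_atTop
    have := hMtop.atTop_mul_pos hL ht
    apply this.congr'
    filter_upwards [Filter.eventually_ge_atTop 1] with M hM
    have hM0 : (M:ℝ) ≠ 0 := by
      have : (1:ℝ) ≤ (M:ℝ) := by exact_mod_cast hM
      positivity
    simp only [htdef]
    field_simp
  -- eventually C < 0
  have hCneg : ∀ᶠ M : ℕ in Filter.atTop, (a^2 - 1) - σw^2 * S M < 0 := by
    have : Filter.Tendsto (fun M => σw^2 * S M) Filter.atTop Filter.atTop :=
      hStop.const_mul_atTop (by positivity)
    filter_upwards [this.eventually_ge_atTop (a^2)] with M hM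
    nlinarith
  -- the simplified function and its limit
  have hg : Filter.Tendsto
      (fun M : ℕ => 2 * a^2 * σw^2 /
        (Real.sqrt (((a^2 - 1)/M - σw^2 * t M)^2 + 4 * a^2 * σw^2 * (t M / M))
          - ((a^2 - 1)/M - σw^2 * t M)))
      Filter.atTop (nhds (a^2 * σv2 / c^2)) := by
    have h1 : Filter.Tendsto (fun M : ℕ => (a^2 - 1)/M - σw^2 * t M) Filter.atTop
        (nhds (-(σw^2 * L))) := by
      have := (tendsto_const_div_atTop_nhds_zero_nat (a^2 - 1)).sub
        ((tendsto_const_nhds (x := σw^2)).mul ht)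
      simpa using this
    have h2 : Filter.Tendsto (fun M : ℕ => t M / M) Filter.atTop (nhds 0) := by
      have h2' : Filter.Tendsto (fun M : ℕ => t M * (1 / (M:ℝ))) Filter.atTop (nhds 0) := by
        simpa using ht.mul tendsto_one_div_atTop_nhds_zero_nat
      exact h2'.congr fun M => (div_eq_mul_one_div _ _).symm
    have hinner : Filter.Tendsto
        (fun M : ℕ => ((a^2 - 1)/M - σw^2 * t M)^2 + 4 * a^2 * σw^2 * (t M / M))
        Filter.atTop (nhds ((σw^2 * L)^2)) := by
      have := ((h1.pow 2).add ((tendsto_const_nhds (x := 4 * a^2 * σw^2)).mul h2))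
      simpa using this
    have hsqrt : Filter.Tendsto
        (fun M : ℕ => Real.sqrt (((a^2 - 1)/M - σw^2 * t M)^2 + 4 * a^2 * σw^2 * (t M / M)))
        Filter.atTop (nhds (σw^2 * L)) := by
      have := (Real.continuous_sqrt.tendsto ((σw^2 * L)^2)).comp hinner
      simpa [Function.comp_def, Real.sqrt_sq (by positivity : (0:ℝ) ≤ σw^2 * L)] using this
    have hdenlim : Filter.Tendsto
        (fun M : ℕ => Real.sqrt (((a^2 - 1)/M - σw^2 * t M)^2 + 4 * a^2 * σw^2 * (t M / M))
          - ((a^2 - 1)/M - σw^2 * t M)) Filter.atTop (nhds (2 * (σw^2 * L))) := by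
      have := hsqrt.sub h1
      convert this using 2
      ring
    have := (tendsto_const_nhds (α := ℕ) (f := Filter.atTop) (x := 2 * a^2 * σw^2)).div
      hdenlim (by positivity)
    convert this using 2
    · rfl
    rw [hLdef]
    field_simp
  -- conclude
  apply hg.congr'
  filter_upwards [Filter.eventually_ge_atTop 1, hCneg] with M hM hCM
  have hM0 : 0 < (M:ℝ) := by
    have : (1:ℝ) ≤ (M:ℝ) := by exact_mod_cast hM
    linarith
  rw [← pinf_key a σw (S M) (M:ℝ) (hSpos M hM) hCM hM0]
end

section
/- (Symmetric orthogonal asymptotics, unscaled.) With S^o(M) = M h^2 c^2 / (h^2 σ_v^2 + σ_n^2), the quantity M·(P(S^o(M)) − σ_w^2) converges to a^2 (σ_v^2 + σ_n^2/h^2)/c^2 as M → ∞. -/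
lemma aux_g_tendsto (d : ℝ) :
    Filter.Tendsto (fun t : ℝ => (d - t + Real.sqrt ((d + t)^2 + 4 * t)) / 2)
      Filter.atTop (nhds (d + 1)) := by
  have hD : Filter.Tendsto (fun t : ℝ => Real.sqrt ((d + t)^2 + 4 * t) + (t + d + 2))
      Filter.atTop Filter.atTop := by
    apply Filter.tendsto_atTop_mono (fun t => ?_)
      (Filter.tendsto_atTop_add_const_right _ (d + 2) Filter.tendsto_id)
    have := Real.sqrt_nonneg ((d + t)^2 + 4 * t)
    simp only [id]; linarith
  have hlim : Filter.Tendsto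
      (fun t : ℝ => (d + 1) - 2 * (d + 1) / (Real.sqrt ((d + t)^2 + 4 * t) + (t + d + 2)))
      Filter.atTop (nhds (d + 1)) := by
    have := Filter.Tendsto.div_atTop (tendsto_const_nhds (x := 2 * (d + 1))) hD
    simpa using (tendsto_const_nhds (x := d + 1)).sub this
  refine hlim.congr' ?_
  filter_upwards [Filter.eventually_ge_atTop (|d| + 1)] with t ht
  have hd : -d ≤ |d| := by cases abs_cases d <;> linarith [abs_nonneg d]
  have hd' : d ≤ |d| := le_abs_self d
  have htpos : 0 < t := by
    have := abs_nonneg d; linarith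
  have hX : 0 ≤ (d + t)^2 + 4 * t := by positivity
  set s := Real.sqrt ((d + t)^2 + 4 * t) with hsdef
  have hs2 : s ^ 2 = (d + t)^2 + 4 * t := Real.sq_sqrt hX
  have hsnn : 0 ≤ s := Real.sqrt_nonneg _
  have hden : s + (t + d + 2) > 0 := by linarith
  field_simp
  nlinarith [hs2]

theorem stmt_10 (a σw h c σv2 σn2 : ℝ) (hσw : 0 < σw) (hh : h ≠ 0) (hc : c ≠ 0)
    (hσv : 0 < σv2) (hσn : 0 ≤ σn2) :
    Filter.Tendsto
      (fun M : ℕ =>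
        (M : ℝ) * (Pinf a σw ((M : ℝ) * h^2 * c^2 / (h^2 * σv2 + σn2)) - σw^2))
      Filter.atTop (nhds (a^2 * (σv2 + σn2 / h^2) / c^2)) := by
  have hh2 : (0:ℝ) < h^2 := by positivity
  have hc2 : (0:ℝ) < c^2 := by positivity
  have hnum : 0 < h^2 * σv2 + σn2 := by nlinarith
  set K : ℝ := (h^2 * σv2 + σn2) / (h^2 * c^2) with hKdef
  have hKpos : 0 < K := div_pos hnum (by positivity)
  set d : ℝ := a^2 - 1 with hddef
  -- the composed inner limit
  have htT : Filter.Tendsto (fun M : ℕ => σw^2 * ((M : ℝ) / K)) Filter.atTop Filter.atTop := by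
    apply Filter.Tendsto.const_mul_atTop (by positivity)
    exact (tendsto_natCast_atTop_atTop (R := ℝ)).atTop_div_const hKpos
  have hmain : Filter.Tendsto
      (fun M : ℕ => K * ((d - σw^2 * ((M:ℝ)/K) +
        Real.sqrt ((d + σw^2 * ((M:ℝ)/K))^2 + 4 * (σw^2 * ((M:ℝ)/K)))) / 2))
      Filter.atTop (nhds (K * (d + 1))) :=
    Filter.Tendsto.const_mul K ((aux_g_tendsto d).comp htT)
  have hval : K * (d + 1) = a^2 * (σv2 + σn2 / h^2) / c^2 := by
    rw [hKdef, hddef]; field_simp; ring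
  rw [← hval]
  refine hmain.congr' ?_
  filter_upwards [Filter.eventually_ge_atTop 1] with M hM
  have hMpos : (0:ℝ) < (M:ℝ) := by exact_mod_cast hM
  set S : ℝ := (M : ℝ) * h^2 * c^2 / (h^2 * σv2 + σn2) with hSdef
  have hSK : S = (M:ℝ) / K := by
    rw [hSdef, hKdef]; field_simp
  have hSpos : 0 < S := by rw [hSK]; positivity
  have hMKS : (M:ℝ) = K * S := by rw [hSK]; field_simp
  have harg : ((a^2 - 1) + σw^2 * S)^2 + 4 * σw^2 * S
      = (d + σw^2 * ((M:ℝ)/K))^2 + 4 * (σw^2 * ((M:ℝ)/K)) := by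
    rw [← hSK, hddef]; ring
  show K * _ = (M:ℝ) * (Pinf a σw S - σw^2)
  rw [Pinf, ← harg, ← hSK, hMKS, hddef]
  set s := Real.sqrt (((a^2 - 1) + σw^2 * S)^2 + 4 * σw^2 * S)
  field_simp
  ring
end

section
/- (Symmetric orthogonal scheme with 1/√M scaling does not reach σ_w^2.) With S^o(M) = h^2 c^2 / (h^2 σ_v^2/M + σ_n^2), as M → ∞ the steady state error covariance P(S^o(M)) converges to P(h^2 c^2/σ_n^2), and this limit is strictly greater than σ_w^2 whenever σ_n^2 > 0. -/
lemma Pinf_gt (a σw S : ℝ) (hσw : 0 < σw) (hS : 0 < S) (ha : a ≠ 0) :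
    σw^2 < Pinf a σw S := by
  unfold Pinf
  set b : ℝ := (a^2 - 1) + σw^2 * S with hb
  rw [lt_div_iff₀ (by positivity)]
  have ha2 : 0 < a^2 := by positivity
  have key : σw^2 * (2*S) - b < Real.sqrt (b^2 + 4 * σw^2 * S) := by
    rcases lt_or_ge (σw^2 * (2*S) - b) 0 with hneg | hpos
    · have := Real.sqrt_nonneg (b^2 + 4 * σw^2 * S)
      linarith
    · refine (Real.lt_sqrt hpos).mpr ?_
      rw [hb]
      nlinarith [mul_pos (mul_pos hS (pow_pos hσw 2)) ha2]
  linarith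

theorem stmt_11 (a σw h c σv2 σn2 : ℝ) (hσw : 0 < σw) (hh : h ≠ 0) (hc : c ≠ 0)
    (hσv : 0 < σv2) (hσn : 0 < σn2) :
    Filter.Tendsto
      (fun M : ℕ => Pinf a σw (h^2 * c^2 / (h^2 * σv2 / (M : ℝ) + σn2)))
      Filter.atTop (nhds (Pinf a σw (h^2 * c^2 / σn2))) ∧
    (a ≠ 0 → σw^2 < Pinf a σw (h^2 * c^2 / σn2)) := by
  constructor
  · have h1 : Filter.Tendsto (fun M : ℕ => (M : ℝ)) Filter.atTop Filter.atTop :=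
      tendsto_natCast_atTop_atTop
    have h2 : Filter.Tendsto (fun M : ℕ => h^2 * σv2 / (M : ℝ)) Filter.atTop (nhds 0) :=
      Filter.Tendsto.div_atTop tendsto_const_nhds h1
    have hden : Filter.Tendsto (fun M : ℕ => h^2 * σv2 / (M : ℝ) + σn2) Filter.atTop
        (nhds σn2) := by
      have := h2.add (tendsto_const_nhds (x := σn2) (f := Filter.atTop (α := ℕ)))
      simpa using this
    have hf : Filter.Tendsto (fun M : ℕ => h^2 * c^2 / (h^2 * σv2 / (M : ℝ) + σn2))
        Filter.atTop (nhds (h^2 * c^2 / σn2)) :=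
      Filter.Tendsto.div tendsto_const_nhds hden hσn.ne'
    have hcont : ContinuousAt (fun S => Pinf a σw S) (h^2 * c^2 / σn2) := by
      unfold Pinf
      apply ContinuousAt.div
      · fun_prop
      · fun_prop
      · positivity
    exact hcont.tendsto.comp hf
  · intro ha
    exact Pinf_gt a σw _ hσw (by positivity) ha
end

section
/- (Sandwich convergence for general parameters.) Under the two-sided bounds on c_i, σ_i^2, h_i and with α_i = sign(c_i)/√M, the multi-access steady state error covariance satisfies M·(P∞(M) − σ_w^2) bounded: its limsup is at most a^2(h_max^2 σ_max^2 + σ_n^2)/(h_min^2 c_min^2) and liminf at least a^2(h_min^2 σ_min^2 + σ_n^2)/(h_max^2 c_max^2); in particular P∞(M) → σ_w^2 at rate O(1/M). -/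
set_option maxHeartbeats 1000000

/-- Denominator function. -/
noncomputable def Dfun (a σw S : ℝ) : ℝ :=
  Real.sqrt ((σw^2*S + (a^2-1))^2 + 4*σw^2*S) + (σw^2*S - (a^2-1))

lemma Dfun_pos (a σw S : ℝ) (hY : a^2 - 1 < σw^2 * S) : 0 < Dfun a σw S := by
  have := Real.sqrt_nonneg ((σw^2*S + (a^2-1))^2 + 4*σw^2*S)
  unfold Dfun; linarith

lemma aux_formula (a σw S : ℝ) (hS : 0 < S) (hY : a^2 - 1 < σw^2 * S) :
    Pinf a σw S - σw^2 = 2*a^2*σw^2 / Dfun a σw S := by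
  set X : ℝ := (σw^2*S + (a^2-1))^2 + 4*σw^2*S with hXdef
  set Y : ℝ := σw^2*S - (a^2-1) with hYdef
  have hY0 : 0 < Y := by simp only [hYdef]; linarith
  have hXnn : 0 ≤ X := by
    have h4 : 0 ≤ 4*a^2*σw^2*S := by positivity
    nlinarith [sq_nonneg Y]
  have hsq : Real.sqrt X ^ 2 = X := Real.sq_sqrt hXnn
  have hD : 0 < Real.sqrt X + Y := by
    have := Real.sqrt_nonneg X; linarith
  have h1 : Pinf a σw S - σw^2 = (Real.sqrt X - Y)/(2*S) := by
    unfold Pinf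
    have harg : ((a^2 - 1) + σw^2 * S)^2 + 4 * σw^2 * S = X := by rw [hXdef]; ring
    rw [harg]
    field_simp
    ring
  have h2 : (Real.sqrt X - Y) * (Real.sqrt X + Y) = 4*a^2*σw^2*S := by
    have : Real.sqrt X ^ 2 - Y^2 = 4*a^2*σw^2*S := by
      rw [hsq, hXdef, hYdef]; ring
    nlinarith [this]
  have hDfun : Dfun a σw S = Real.sqrt X + Y := rfl
  rw [h1, hDfun, div_eq_div_iff (by positivity) (ne_of_gt hD)]
  nlinarith [h2]

lemma aux_mono (a σw : ℝ) (S1 S2 : ℝ) (h1 : 0 ≤ S1) (h12 : S1 ≤ S2) :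
    Dfun a σw S1 ≤ Dfun a σw S2 := by
  unfold Dfun
  have hX : (σw^2*S1 + (a^2-1))^2 + 4*σw^2*S1 ≤ (σw^2*S2 + (a^2-1))^2 + 4*σw^2*S2 := by
    nlinarith [mul_nonneg (mul_nonneg (sq_nonneg σw) (sub_nonneg.2 h12))
      (by nlinarith [sq_nonneg σw, sq_nonneg a, mul_nonneg (sq_nonneg σw) (h1.trans h12),
        mul_nonneg (sq_nonneg σw) h1] : (0:ℝ) ≤ σw^2*(S1+S2) + 2*a^2 + 2)]
  have := Real.sqrt_le_sqrt hX
  have h2 : σw^2*S1 ≤ σw^2*S2 := by nlinarith [sq_nonneg σw]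
  linarith

lemma aux_denom_limit (a σw t : ℝ) (hσw : 0 < σw) (ht : 0 < t) :
    Filter.Tendsto (fun M : ℕ => Dfun a σw (t*M) / (M:ℝ)) Filter.atTop
      (nhds (2*σw^2*t)) := by
  have hσ2 : 0 < σw^2 := by positivity
  set G : ℝ → ℝ := fun u =>
    Real.sqrt ((σw^2*t + (a^2-1)*u)^2 + 4*σw^2*t*u) + (σw^2*t - (a^2-1)*u) with hGdef
  have hGcont : Continuous G := by
    apply Continuous.add
    · exact (Continuous.add (by continuity) (by continuity)).sqrt
    · continuity
  have hG0 : G 0 = 2*σw^2*t := by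
    simp only [hGdef]
    have : (σw^2*t + (a^2-1)*0)^2 + 4*σw^2*t*0 = (σw^2*t)^2 := by ring
    rw [this, Real.sqrt_sq (by positivity)]
    ring
  have hcomp : Filter.Tendsto (fun M : ℕ => G (1/(M:ℝ))) Filter.atTop (nhds (2*σw^2*t)) := by
    rw [← hG0]
    exact hGcont.continuousAt.tendsto.comp tendsto_one_div_atTop_nhds_zero_nat
  apply hcomp.congr'
  filter_upwards [Filter.eventually_ge_atTop 1] with M hM
  have hM0 : 0 < (M:ℝ) := by exact_mod_cast hM
  have hXnn : 0 ≤ (σw^2*(t*M) + (a^2-1))^2 + 4*σw^2*(t*M) := by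
    nlinarith [sq_nonneg (σw^2*(t*M) - (a^2-1)), mul_pos (mul_pos hσ2 ht) hM0, sq_nonneg a]
  have hinner : (σw^2*t + (a^2-1)*(1/(M:ℝ)))^2 + 4*σw^2*t*(1/(M:ℝ))
      = ((σw^2*(t*M) + (a^2-1))^2 + 4*σw^2*(t*M))/(M:ℝ)^2 := by
    field_simp
  simp only [hGdef]
  rw [hinner, Real.sqrt_div hXnn, Real.sqrt_sq hM0.le]
  unfold Dfun
  field_simp

lemma aux_limit (a σw t : ℝ) (hσw : 0 < σw) (ht : 0 < t) :
    Filter.Tendsto (fun M : ℕ => (M:ℝ) * (2*a^2*σw^2 / Dfun a σw (t*M))) Filter.atTop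
      (nhds (a^2/t)) := by
  have hσ2 : 0 < σw^2 := by positivity
  have hne : (2*σw^2*t) ≠ 0 := by positivity
  have hT := (Filter.Tendsto.div (tendsto_const_nhds (x := 2*a^2*σw^2))
    (aux_denom_limit a σw t hσw ht) hne)
  have heq : 2*a^2*σw^2 / (2*σw^2*t) = a^2/t := by field_simp
  rw [heq] at hT
  apply hT.congr
  intro M
  simp only [Pi.div_apply]
  rw [div_div_eq_mul_div]
  ring

theorem stmt_13 (a σw σn2 : ℝ) (hσw : 0 < σw) (hσn : 0 ≤ σn2)
    (c σsq h : ℕ → ℝ)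
    (cmin cmax σmin2 σmax2 hmin hmax : ℝ)
    (hcmin : 0 < cmin) (hσmin : 0 < σmin2) (hhmin : 0 < hmin)
    (hc : ∀ i, cmin ≤ |c i| ∧ |c i| ≤ cmax)
    (hσ : ∀ i, σmin2 ≤ σsq i ∧ σsq i ≤ σmax2)
    (hh : ∀ i, hmin ≤ h i ∧ h i ≤ hmax) :
    let S : ℕ → ℝ := fun M =>
      (∑ i ∈ Finset.range M, h i * |c i| / Real.sqrt M)^2 /
        (∑ i ∈ Finset.range M, (h i)^2 * σsq i / M + σn2)
    Filter.limsup (fun M : ℕ => (M : ℝ) * (Pinf a σw (S M) - σw^2)) Filter.atTop ≤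
        a^2 * (hmax^2 * σmax2 + σn2) / (hmin^2 * cmin^2) ∧
      a^2 * (hmin^2 * σmin2 + σn2) / (hmax^2 * cmax^2) ≤
        Filter.liminf (fun M : ℕ => (M : ℝ) * (Pinf a σw (S M) - σw^2)) Filter.atTop ∧
      Filter.Tendsto (fun M : ℕ => Pinf a σw (S M)) Filter.atTop (nhds (σw^2)) := by
  intro S
  have hσ2 : 0 < σw^2 := by positivity
  have hcmax : 0 < cmax := hcmin.trans_le ((hc 0).1.trans (hc 0).2)
  have hσmax : 0 < σmax2 := hσmin.trans_le ((hσ 0).1.trans (hσ 0).2)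
  have hhmax : 0 < hmax := hhmin.trans_le ((hh 0).1.trans (hh 0).2)
  have hden1 : 0 < hmax^2*σmax2 + σn2 := by positivity
  have hden2 : 0 < hmin^2*σmin2 + σn2 := by positivity
  set L : ℝ := hmin^2*cmin^2/(hmax^2*σmax2 + σn2) with hLdef
  set U : ℝ := hmax^2*cmax^2/(hmin^2*σmin2 + σn2) with hUdef
  have hL : 0 < L := by positivity
  have hU : 0 < U := by positivity
  -- bounds on S M
  have hSbound : ∀ M : ℕ, 1 ≤ M → L*M ≤ S M ∧ S M ≤ U*M := by
    intro M hM
    have hM0 : 0 < (M:ℝ) := by exact_mod_cast hM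
    set A : ℝ := ∑ i ∈ Finset.range M, h i * |c i| with hAdef
    have hA1 : (M:ℝ)*(hmin*cmin) ≤ A := by
      calc (M:ℝ)*(hmin*cmin) = ∑ _i ∈ Finset.range M, hmin*cmin := by
            rw [Finset.sum_const, Finset.card_range, nsmul_eq_mul]
        _ ≤ A := Finset.sum_le_sum fun i _ =>
            mul_le_mul (hh i).1 (hc i).1 hcmin.le (hhmin.le.trans (hh i).1)
    have hA2 : A ≤ (M:ℝ)*(hmax*cmax) := by
      calc A ≤ ∑ _i ∈ Finset.range M, hmax*cmax := Finset.sum_le_sum fun i _ =>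
            mul_le_mul (hh i).2 (hc i).2 (abs_nonneg _) (hhmin.le.trans ((hh i).1.trans (hh i).2))
        _ = (M:ℝ)*(hmax*cmax) := by
            rw [Finset.sum_const, Finset.card_range, nsmul_eq_mul]
    have hA0 : 0 ≤ A := le_trans (by positivity) hA1
    set B1 : ℝ := ∑ i ∈ Finset.range M, (h i)^2 * σsq i / M with hB1def
    have hB1lo : hmin^2*σmin2 ≤ B1 := by
      have : (M:ℝ)*(hmin^2*σmin2/M) ≤ B1 := by
        calc (M:ℝ)*(hmin^2*σmin2/M) = ∑ _i ∈ Finset.range M, hmin^2*σmin2/M := by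
              rw [Finset.sum_const, Finset.card_range, nsmul_eq_mul]
          _ ≤ B1 := Finset.sum_le_sum fun i _ => by
              apply div_le_div_of_nonneg_right ?_ hM0.le
              exact mul_le_mul (by nlinarith [(hh i).1, hhmin.le]) (hσ i).1 hσmin.le
                (by positivity)
      calc hmin^2*σmin2 = (M:ℝ)*(hmin^2*σmin2/M) := by field_simp
        _ ≤ B1 := this
    have hB1hi : B1 ≤ hmax^2*σmax2 := by
      have : B1 ≤ (M:ℝ)*(hmax^2*σmax2/M) := by
        calc B1 ≤ ∑ _i ∈ Finset.range M, hmax^2*σmax2/M := Finset.sum_le_sum fun i _ => by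
              apply div_le_div_of_nonneg_right ?_ hM0.le
              have hhi : 0 ≤ h i := hhmin.le.trans (hh i).1
              exact mul_le_mul (by nlinarith [(hh i).2]) (hσ i).2
                (hσmin.le.trans (hσ i).1) (by positivity)
          _ = (M:ℝ)*(hmax^2*σmax2/M) := by
              rw [Finset.sum_const, Finset.card_range, nsmul_eq_mul]
      calc B1 ≤ (M:ℝ)*(hmax^2*σmax2/M) := this
        _ = hmax^2*σmax2 := by field_simp
    have hBpos : 0 < B1 + σn2 := by nlinarith [mul_pos (mul_pos hhmin hhmin) hσmin]
    have hSM : S M = A^2/((M:ℝ)*(B1+σn2)) := by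
      show (∑ i ∈ Finset.range M, h i * |c i| / Real.sqrt M)^2 /
        (∑ i ∈ Finset.range M, (h i)^2 * σsq i / M + σn2) = _
      rw [← Finset.sum_div, ← hAdef, ← hB1def, div_pow, Real.sq_sqrt hM0.le, div_div]
    have hA1sq : ((M:ℝ)*(hmin*cmin))^2 ≤ A^2 := pow_le_pow_left₀ (by positivity) hA1 2
    have hA2sq : A^2 ≤ ((M:ℝ)*(hmax*cmax))^2 := pow_le_pow_left₀ hA0 hA2 2
    have hLmul : L*(hmax^2*σmax2 + σn2) = hmin^2*cmin^2 :=
      div_mul_cancel₀ _ (ne_of_gt hden1)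
    have hUmul : U*(hmin^2*σmin2 + σn2) = hmax^2*cmax^2 :=
      div_mul_cancel₀ _ (ne_of_gt hden2)
    constructor
    · rw [hSM, le_div_iff₀ (by positivity)]
      have hLB : L*(B1+σn2) ≤ hmin^2*cmin^2 := by
        calc L*(B1+σn2) ≤ L*(hmax^2*σmax2 + σn2) := by nlinarith
          _ = hmin^2*cmin^2 := hLmul
      nlinarith [sq_nonneg (M:ℝ), mul_le_mul_of_nonneg_left hLB (sq_nonneg (M:ℝ))]
    · rw [hSM, div_le_iff₀ (by positivity)]
      have hUB : hmax^2*cmax^2 ≤ U*(B1+σn2) := by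
        calc hmax^2*cmax^2 = U*(hmin^2*σmin2 + σn2) := hUmul.symm
          _ ≤ U*(B1+σn2) := by nlinarith
      nlinarith [sq_nonneg (M:ℝ), mul_le_mul_of_nonneg_left hUB (sq_nonneg (M:ℝ))]
  -- the sandwich sequences
  set f : ℕ → ℝ := fun M => (M : ℝ) * (Pinf a σw (S M) - σw^2) with hfdef
  set up : ℕ → ℝ := fun M => (M:ℝ) * (2*a^2*σw^2 / Dfun a σw (L*M)) with hupdef
  set lo : ℕ → ℝ := fun M => (M:ℝ) * (2*a^2*σw^2 / Dfun a σw (U*M)) with hlodef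
  have hupT : Filter.Tendsto up Filter.atTop (nhds (a^2/L)) := aux_limit a σw L hσw hL
  have hloT : Filter.Tendsto lo Filter.atTop (nhds (a^2/U)) := aux_limit a σw U hσw hU
  -- eventually threshold
  have hevY : ∀ᶠ M : ℕ in Filter.atTop, a^2 - 1 < σw^2 * (L*(M:ℝ)) := by
    have hT : Filter.Tendsto (fun M : ℕ => σw^2 * (L*(M:ℝ))) Filter.atTop Filter.atTop := by
      have : Filter.Tendsto (fun M : ℕ => (M:ℝ)) Filter.atTop Filter.atTop :=
        tendsto_natCast_atTop_atTop
      have h2 := this.const_mul_atTop (by positivity : (0:ℝ) < σw^2 * L)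
      apply h2.congr
      intro M; ring
    exact hT.eventually_gt_atTop _
  have hev : ∀ᶠ M : ℕ in Filter.atTop, lo M ≤ f M ∧ f M ≤ up M := by
    filter_upwards [hevY, Filter.eventually_ge_atTop 1] with M hYM hM1
    have hM0 : 0 < (M:ℝ) := by exact_mod_cast hM1
    obtain ⟨hS1, hS2⟩ := hSbound M hM1
    have hLM : 0 < L*(M:ℝ) := by positivity
    have hSpos : 0 < S M := lt_of_lt_of_le hLM hS1
    have hYS : a^2 - 1 < σw^2 * S M :=
      lt_of_lt_of_le hYM (mul_le_mul_of_nonneg_left hS1 hσ2.le)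
    have hYU : a^2 - 1 < σw^2 * (U*(M:ℝ)) :=
      lt_of_lt_of_le hYM (mul_le_mul_of_nonneg_left (hS1.trans hS2) hσ2.le)
    have hform : f M = (M:ℝ) * (2*a^2*σw^2 / Dfun a σw (S M)) := by
      simp only [hfdef]
      rw [aux_formula a σw (S M) hSpos hYS]
    have hDL : 0 < Dfun a σw (L*M) := Dfun_pos a σw _ hYM
    have hDS : 0 < Dfun a σw (S M) := Dfun_pos a σw _ hYS
    constructor
    · -- lo M ≤ f M
      rw [hform]
      simp only [hlodef]
      have hmono : Dfun a σw (S M) ≤ Dfun a σw (U*M) := aux_mono a σw _ _ hSpos.le hS2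
      have : 2*a^2*σw^2 / Dfun a σw (U*M) ≤ 2*a^2*σw^2 / Dfun a σw (S M) :=
        div_le_div_of_nonneg_left (by positivity) hDS hmono
      exact mul_le_mul_of_nonneg_left this hM0.le
    · -- f M ≤ up M
      rw [hform]
      simp only [hupdef]
      have hmono : Dfun a σw (L*M) ≤ Dfun a σw (S M) := aux_mono a σw _ _ hLM.le hS1
      have : 2*a^2*σw^2 / Dfun a σw (S M) ≤ 2*a^2*σw^2 / Dfun a σw (L*M) :=
        div_le_div_of_nonneg_left (by positivity) hDL hmono
      exact mul_le_mul_of_nonneg_left this hM0.le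
  have hevlo : ∀ᶠ M : ℕ in Filter.atTop, lo M ≤ f M := hev.mono fun M hM => hM.1
  have hevup : ∀ᶠ M : ℕ in Filter.atTop, f M ≤ up M := hev.mono fun M hM => hM.2
  -- cobounded/bounded facts
  have hlobd : ∀ᶠ M : ℕ in Filter.atTop, a^2/U - 1 ≤ f M := by
    filter_upwards [hevlo, hloT.eventually (eventually_gt_nhds (by linarith : a^2/U - 1 < a^2/U))]
      with M h1 h2
    linarith
  have hupbd : ∀ᶠ M : ℕ in Filter.atTop, f M ≤ a^2/L + 1 := by
    filter_upwards [hevup, hupT.eventually (eventually_lt_nhds (by linarith : a^2/L < a^2/L + 1))]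
      with M h1 h2
    linarith
  have hLval : a^2/L = a^2 * (hmax^2 * σmax2 + σn2) / (hmin^2 * cmin^2) := by
    rw [hLdef, div_div_eq_mul_div]
  have hUval : a^2/U = a^2 * (hmin^2 * σmin2 + σn2) / (hmax^2 * cmax^2) := by
    rw [hUdef, div_div_eq_mul_div]
  refine ⟨?_, ?_, ?_⟩
  · -- limsup bound
    have hco : Filter.IsCoboundedUnder (· ≤ ·) Filter.atTop f :=
      Filter.isCoboundedUnder_le_of_eventually_le Filter.atTop hlobd
    have hbd : Filter.IsBoundedUnder (· ≤ ·) Filter.atTop up := hupT.isBoundedUnder_le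
    have h1 : Filter.limsup f Filter.atTop ≤ Filter.limsup up Filter.atTop :=
      Filter.limsup_le_limsup hevup hco hbd
    rw [hupT.limsup_eq] at h1
    rw [← hLval]
    exact h1
  · -- liminf bound
    have hco : Filter.IsCoboundedUnder (· ≥ ·) Filter.atTop f :=
      Filter.isCoboundedUnder_ge_of_eventually_le Filter.atTop hupbd
    have hbd : Filter.IsBoundedUnder (· ≥ ·) Filter.atTop lo := hloT.isBoundedUnder_ge
    have h1 : Filter.liminf lo Filter.atTop ≤ Filter.liminf f Filter.atTop :=
      Filter.liminf_le_liminf hevlo hbd hco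
    rw [hloT.liminf_eq] at h1
    rw [← hUval]
    exact h1
  · -- convergence
    have hgT : Filter.Tendsto (fun M : ℕ => lo M * (1/(M:ℝ))) Filter.atTop (nhds 0) := by
      have := hloT.mul tendsto_one_div_atTop_nhds_zero_nat
      simpa using this
    have hhT : Filter.Tendsto (fun M : ℕ => up M * (1/(M:ℝ))) Filter.atTop (nhds 0) := by
      have := hupT.mul tendsto_one_div_atTop_nhds_zero_nat
      simpa using this
    have h0 : Filter.Tendsto (fun M : ℕ => Pinf a σw (S M) - σw^2) Filter.atTop (nhds 0) := by
      apply tendsto_of_tendsto_of_tendsto_of_le_of_le' hgT hhT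
      · filter_upwards [hevlo, Filter.eventually_ge_atTop 1] with M h1 hM1
        have hM0 : 0 < (M:ℝ) := by exact_mod_cast hM1
        have hfM : f M * (1/(M:ℝ)) = Pinf a σw (S M) - σw^2 := by
          simp only [hfdef]
          field_simp
        rw [← hfM]
        have := mul_le_mul_of_nonneg_right h1 (by positivity : (0:ℝ) ≤ 1/(M:ℝ))
        exact this
      · filter_upwards [hevup, Filter.eventually_ge_atTop 1] with M h1 hM1
        have hM0 : 0 < (M:ℝ) := by exact_mod_cast hM1
        have hfM : f M * (1/(M:ℝ)) = Pinf a σw (S M) - σw^2 := by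
          simp only [hfdef]
          field_simp
        rw [← hfM]
        exact mul_le_mul_of_nonneg_right h1 (by positivity : (0:ℝ) ≤ 1/(M:ℝ))
    have := h0.const_add (σw^2)
    simp only [add_zero] at this
    apply this.congr
    intro M
    ring
end

section
/- (Feasibility condition.) The constraint set {(α_1,…,α_M) : (∑ α_i^2 τ_i + σ_n^2)·x ≤ (∑ α_i ρ_i)^2 · y} is nonempty if and only if ∑_{i=1}^M ρ_i^2/τ_i > x/y, given x, y, σ_n^2 > 0, τ_i > 0, ρ_i ∈ ℝ. -/
theorem stmt_15 (M : ℕ) (hM : 1 ≤ M) (x y σn2 : ℝ) (hx : 0 < x) (hy : 0 < y)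
    (hσn : 0 < σn2) (τ ρ : Fin M → ℝ) (hτ : ∀ i, 0 < τ i) :
    (∃ α : Fin M → ℝ,
        (∑ i, (α i)^2 * τ i + σn2) * x ≤ (∑ i, α i * ρ i)^2 * y) ↔
      x / y < ∑ i, (ρ i)^2 / τ i := by
  constructor
  · rintro ⟨α, hα⟩
    set A := ∑ i, (α i)^2 * τ i with hA
    set S := ∑ i, (ρ i)^2 / τ i with hS
    have hA0 : 0 ≤ A := Finset.sum_nonneg fun i _ => mul_nonneg (sq_nonneg _) (hτ i).le
    have hCS : (∑ i, α i * ρ i)^2 ≤ A * S := by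
      have h := Finset.sum_mul_sq_le_sq_mul_sq Finset.univ
        (fun i => α i * Real.sqrt (τ i)) (fun i => ρ i / Real.sqrt (τ i))
      have e1 : ∀ i ∈ Finset.univ, (α i * Real.sqrt (τ i)) * (ρ i / Real.sqrt (τ i)) = α i * ρ i := by
        intro i _
        have hs : Real.sqrt (τ i) ≠ 0 := (Real.sqrt_pos.mpr (hτ i)).ne'
        field_simp
      have e2 : ∀ i ∈ Finset.univ, (α i * Real.sqrt (τ i))^2 = (α i)^2 * τ i := by
        intro i _
        rw [mul_pow, Real.sq_sqrt (hτ i).le]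
      have e3 : ∀ i ∈ Finset.univ, (ρ i / Real.sqrt (τ i))^2 = (ρ i)^2 / τ i := by
        intro i _
        rw [div_pow, Real.sq_sqrt (hτ i).le]
      rw [Finset.sum_congr rfl e1, Finset.sum_congr rfl e2, Finset.sum_congr rfl e3] at h
      exact h
    rw [div_lt_iff₀ hy]
    by_contra hcon
    push_neg at hcon
    nlinarith [sq_nonneg (∑ i, α i * ρ i)]
  · intro h
    set S := ∑ i, (ρ i)^2 / τ i with hS
    have hS0 : 0 < S := lt_trans (div_pos hx hy) h
    have hxy : x < S * y := (div_lt_iff₀ hy).mp h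
    have hd : 0 < S * (S*y - x) := mul_pos hS0 (by linarith)
    set c := Real.sqrt (σn2 * x / (S * (S*y - x))) with hc
    have hc2 : c^2 = σn2 * x / (S * (S*y - x)) := by
      rw [hc, Real.sq_sqrt]
      positivity
    refine ⟨fun i => c * (ρ i / τ i), ?_⟩
    have h1 : ∑ i, (c * (ρ i / τ i))^2 * τ i = c^2 * S := by
      rw [hS, Finset.mul_sum]
      refine Finset.sum_congr rfl fun i _ => ?_
      have := (hτ i).ne'
      field_simp
    have h2 : ∑ i, (c * (ρ i / τ i)) * ρ i = c * S := by
      rw [hS, Finset.mul_sum]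
      refine Finset.sum_congr rfl fun i _ => ?_
      have := (hτ i).ne'
      field_simp
    rw [h1, h2]
    have key : c^2 * S * (S*y - x) = σn2 * x := by
      rw [hc2, mul_assoc]
      exact div_mul_cancel₀ _ hd.ne'
    nlinarith [sq_nonneg c]
end
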